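/- Let G be a maximal outerplanar graph of order n ≥ 4 containing no internal triangle, and let {i, j} with i < j be a diagonal of G (so j − i ≥ 2 and (i,j) ≠ (0, n−1)). Then i and j have a common neighbor which is either i+1 or j−1 (i.e., G.Adj (i+1) j or G.Adj (j−1) i), and they also have a common neighbor which is either (j+1) mod n or (i−1) mod n (i.e., G.Adj ((j+1) mod n) i or G.Adj ((i−1) mod n) j). -/

import Mathlib

open SimpleGraph

/-- `G` is (the representation of) a maximal outerplanar graph on the convex polygon
`0, 1, …, n-1`: it contains all outer edges `{i, (i+1) mod n}`, no two of its edges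
cross, and it has exactly `2n - 3` edges. -/
def IsMop {n : ℕ} [NeZero n] (G : SimpleGraph (Fin n)) : Prop :=
  (∀ i : Fin n, G.Adj i (i + 1)) ∧
  (∀ a b c d : Fin n, a < b → b < c → c < d → G.Adj a c → ¬ G.Adj b d) ∧
  G.edgeSet.ncard = 2 * n - 3

/-- An edge of `G` that is not an outer edge of the polygon. -/
def IsDiagonal {n : ℕ} [NeZero n] (G : SimpleGraph (Fin n)) (u v : Fin n) : Prop :=
  G.Adj u v ∧ v ≠ u + 1 ∧ u ≠ v + 1

/-- Three pairwise adjacent vertices all of whose connecting edges are diagonals. -/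
def IsInternalTriangle {n : ℕ} [NeZero n] (G : SimpleGraph (Fin n)) (a b c : Fin n) : Prop :=
  IsDiagonal G a b ∧ IsDiagonal G b c ∧ IsDiagonal G a c

/-- The number of vertices of `G` having degree `2`. -/
noncomputable def degTwoCount {n : ℕ} (G : SimpleGraph (Fin n)) : ℕ :=
  {v : Fin n | (G.neighborSet v).ncard = 2}.ncard

/-- `D` is a dominating set of `G`. -/
def IsDomSet {V : Type*} (G : SimpleGraph V) (D : Set V) : Prop :=
  ∀ v ∉ D, ∃ u ∈ D, G.Adj u v

/-- `D` is a disjunctive dominating set (2DD-set) of `G`: every vertex outside `D`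
has a neighbor in `D` or at least two vertices of `D` at distance exactly `2`. -/
def IsDisjDomSet {V : Type*} (G : SimpleGraph V) (D : Set V) : Prop :=
  ∀ v ∉ D, (∃ u ∈ D, G.Adj u v) ∨
    ∃ u ∈ D, ∃ w ∈ D, u ≠ w ∧ G.dist u v = 2 ∧ G.dist w v = 2

/-- The domination number `γ(G)`. -/
noncomputable def domNum {V : Type*} [Fintype V] (G : SimpleGraph V) : ℕ :=
  sInf {k : ℕ | ∃ D : Set V, IsDomSet G D ∧ D.ncard = k}

/-- The disjunctive domination number `γ₂ᵈ(G)`. -/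
noncomputable def disjDomNum {V : Type*} [Fintype V] (G : SimpleGraph V) : ℕ :=
  sInf {k : ℕ | ∃ D : Set V, IsDisjDomSet G D ∧ D.ncard = k}

/-- noncrossing property -/
def NC {n : ℕ} (H : SimpleGraph (Fin n)) : Prop :=
  ∀ a b c d : Fin n, a < b → b < c → c < d → H.Adj a c → ¬ H.Adj b d

/-- ordered adjacent pairs within interval [a,b] -/
def PS {n : ℕ} (H : SimpleGraph (Fin n)) (a b : Fin n) : Set (Fin n × Fin n) :=
  {p | H.Adj p.1 p.2 ∧ p.1 < p.2 ∧ a ≤ p.1 ∧ p.2 ≤ b}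

lemma PS_bound {n : ℕ} [NeZero n] (H : SimpleGraph (Fin n)) (hH : NC H) :
    ∀ d : ℕ, ∀ a b : Fin n, (b : ℕ) = (a : ℕ) + d → (PS H a b).ncard ≤ 2 * d - 1 := by
  intro d
  induction d using Nat.strong_induction_on with
  | _ d ih =>
    intro a b hba
    rcases Nat.eq_zero_or_pos d with hd0 | hdpos
    · subst hd0
      have hab : a = b := Fin.ext (by omega)
      have : PS H a b = ∅ := by
        ext p
        simp only [PS, Set.mem_setOf_eq, Set.mem_empty_iff_false, iff_false]
        rintro ⟨_, h2, h3, h4⟩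
        subst hab
        exact absurd (lt_of_le_of_lt h3 (lt_of_lt_of_le h2 h4)) (lt_irrefl a)
      simp [this]
    have hab : a < b := by rw [Fin.lt_def]; omega
    classical
    set S : Finset (Fin n) := Finset.univ.filter (fun x => H.Adj a x ∧ a < x ∧ x < b) with hS
    by_cases hne : S.Nonempty
    · set c := S.max' hne with hc
      have hcS : c ∈ S := S.max'_mem hne
      simp only [hS, Finset.mem_filter] at hcS
      obtain ⟨-, hadj_ac, hac, hcb⟩ := hcS
      have hmax : ∀ x : Fin n, H.Adj a x → a < x → x < b → x ≤ c := by
        intro x h1 h2 h3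
        exact S.le_max' x (by simp [hS, h1, h2, h3])
      have hsub : PS H a b ⊆ PS H a c ∪ PS H c b ∪ {(a, b)} := by
        rintro ⟨x, y⟩ ⟨h1, h2, h3, h4⟩
        by_cases hyc : y ≤ c
        · exact Or.inl (Or.inl ⟨h1, h2, h3, hyc⟩)
        push_neg at hyc
        rcases eq_or_lt_of_le h3 with hxa | hxa
        · -- x = a
          have hyb : y = b := by
            by_contra hyb
            have : y ≤ c := hmax y (hxa ▸ h1) (hxa ▸ h2) (lt_of_le_of_ne h4 hyb)
            exact absurd this (not_le.mpr hyc)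
          refine Or.inr ?_
          simp only [Set.mem_singleton_iff, Prod.mk.injEq]
          exact ⟨hxa.symm, hyb⟩
        · -- a < x
          rcases lt_or_ge x c with hxc | hxc
          · exact absurd h1 (hH a x c y hxa hxc hyc hadj_ac)
          · exact Or.inl (Or.inr ⟨h1, h2, hxc, h4⟩)
      have e1 : (c : ℕ) = (a : ℕ) + ((c : ℕ) - (a : ℕ)) := by omega
      have e2 : (b : ℕ) = (c : ℕ) + ((b : ℕ) - (c : ℕ)) := by omega
      have d1lt : (c : ℕ) - (a : ℕ) < d := by
        have := hcb; rw [Fin.lt_def] at this hac; omega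
      have d2lt : (b : ℕ) - (c : ℕ) < d := by
        have := hcb; rw [Fin.lt_def] at this hac; omega
      have b1 := ih _ d1lt a c e1
      have b2 := ih _ d2lt c b e2
      have hcard := Set.ncard_union_le (PS H a c ∪ PS H c b) {(a,b)}
      have hcard2 := Set.ncard_union_le (PS H a c) (PS H c b)
      have hmono := Set.ncard_le_ncard hsub (Set.toFinite _)
      simp only [Set.ncard_singleton] at hcard
      have h1 : 1 ≤ (c : ℕ) - (a : ℕ) := by rw [Fin.lt_def] at hac; omega
      have h2 : 1 ≤ (b : ℕ) - (c : ℕ) := by rw [Fin.lt_def] at hcb; omega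
      have := hcb; rw [Fin.lt_def] at this
      omega
    · -- a has no neighbor strictly inside (a,b)
      have hnot : ∀ x : Fin n, H.Adj a x → a < x → x < b → False := by
        intro x h1 h2 h3
        exact hne ⟨x, by simp [hS, h1, h2, h3]⟩
      have ha1 : ((a + 1 : Fin n) : ℕ) = (a : ℕ) + 1 := by
        rw [Fin.add_def]
        simp only [Fin.val_one']
        have hn : 2 ≤ n := by have := b.isLt; omega
        have : (1 : ℕ) % n = 1 := Nat.mod_eq_of_lt (by omega)
        rw [this]
        exact Nat.mod_eq_of_lt (by have := b.isLt; omega)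
      have hsub : PS H a b ⊆ PS H (a+1) b ∪ {(a, b)} := by
        rintro ⟨x, y⟩ ⟨h1, h2, h3, h4⟩
        rcases eq_or_lt_of_le h3 with hxa | hxa
        · have hyb : y = b := by
            by_contra hyb
            exact hnot y (hxa ▸ h1) (hxa ▸ h2) (lt_of_le_of_ne h4 hyb)
          refine Or.inr ?_
          simp only [Set.mem_singleton_iff, Prod.mk.injEq]
          exact ⟨hxa.symm, hyb⟩
        · refine Or.inl ⟨h1, h2, ?_, h4⟩
          rw [Fin.le_def, ha1]
          rw [Fin.lt_def] at hxa; omega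
      have e1 : (b : ℕ) = ((a + 1 : Fin n) : ℕ) + (d - 1) := by rw [ha1]; omega
      have b1 := ih (d-1) (by omega) (a+1) b e1
      have hcard := Set.ncard_union_le (PS H (a+1) b) {(a,b)}
      have hmono := Set.ncard_le_ncard hsub (Set.toFinite _)
      simp only [Set.ncard_singleton] at hcard
      omega

lemma val_add_cases {n : ℕ} [NeZero n] (x r : Fin n) :
    (((x + r : Fin n) : ℕ) = (x : ℕ) + (r : ℕ) ∧ (x : ℕ) + (r : ℕ) < n) ∨
    (((x + r : Fin n) : ℕ) = (x : ℕ) + (r : ℕ) - n ∧ n ≤ (x : ℕ) + (r : ℕ)) := by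
  have hx := x.isLt
  have hr := r.isLt
  rw [Fin.add_def]
  rcases lt_or_ge ((x : ℕ) + (r : ℕ)) n with h | h
  · exact Or.inl ⟨Nat.mod_eq_of_lt h, h⟩
  · refine Or.inr ⟨?_, h⟩
    show ((x : ℕ) + (r : ℕ)) % n = (x : ℕ) + (r : ℕ) - n
    rw [Nat.mod_eq_sub_mod h]
    exact Nat.mod_eq_of_lt (by omega)

lemma NC_comap {n : ℕ} [NeZero n] (G : SimpleGraph (Fin n)) (hnc : NC G) (r : Fin n) :
    NC (G.comap (fun x => x + r)) := by
  intro a b c d hab hbc hcd h1 h2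
  simp only [comap_adj] at h1 h2
  have hab' : (a : ℕ) < (b : ℕ) := hab
  have hbc' : (b : ℕ) < (c : ℕ) := hbc
  have hcd' : (c : ℕ) < (d : ℕ) := hcd
  rcases val_add_cases a r with ⟨ha, ha'⟩ | ⟨ha, ha'⟩ <;>
  rcases val_add_cases b r with ⟨hb, hb'⟩ | ⟨hb, hb'⟩ <;>
  rcases val_add_cases c r with ⟨hc, hc'⟩ | ⟨hc, hc'⟩ <;>
  rcases val_add_cases d r with ⟨hd, hd'⟩ | ⟨hd, hd'⟩
  -- feasible wrap patterns: none, {d}, {c,d}, {b,c,d}, all ; others contradict by omega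
  · exact hnc (a+r) (b+r) (c+r) (d+r) (by rw [Fin.lt_def]; omega) (by rw [Fin.lt_def]; omega)
      (by rw [Fin.lt_def]; omega) h1 h2
  · exact hnc (d+r) (a+r) (b+r) (c+r) (by rw [Fin.lt_def]; omega) (by rw [Fin.lt_def]; omega)
      (by rw [Fin.lt_def]; omega) h2.symm h1
  · omega
  · exact hnc (c+r) (d+r) (a+r) (b+r) (by rw [Fin.lt_def]; omega) (by rw [Fin.lt_def]; omega)
      (by rw [Fin.lt_def]; omega) h1.symm h2.symm
  · omega
  · omega
  · omega
  · exact hnc (b+r) (c+r) (d+r) (a+r) (by rw [Fin.lt_def]; omega) (by rw [Fin.lt_def]; omega)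
      (by rw [Fin.lt_def]; omega) h2 h1.symm
  · omega
  · omega
  · omega
  · omega
  · omega
  · omega
  · omega
  · exact hnc (a+r) (b+r) (c+r) (d+r) (by rw [Fin.lt_def]; omega) (by rw [Fin.lt_def]; omega)
      (by rw [Fin.lt_def]; omega) h1 h2

lemma outer_comap {n : ℕ} [NeZero n] (G : SimpleGraph (Fin n))
    (houter : ∀ i : Fin n, G.Adj i (i + 1)) (r : Fin n) :
    ∀ i : Fin n, (G.comap (fun x => x + r)).Adj i (i + 1) := by
  intro i
  simp only [comap_adj]
  have : i + 1 + r = (i + r) + 1 := add_right_comm i 1 r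
  rw [this]
  exact houter (i + r)

lemma card_comap {n : ℕ} [NeZero n] (G : SimpleGraph (Fin n)) (r : Fin n) :
    (G.comap (fun x => x + r)).edgeSet.ncard = G.edgeSet.ncard := by
  have himg : G.edgeSet = Sym2.map (fun x : Fin n => x + r) '' (G.comap (fun x => x + r)).edgeSet := by
    ext e
    refine e.ind (fun u v => ?_)
    simp only [mem_edgeSet, Set.mem_image]
    constructor
    · intro h
      refine ⟨s(u - r, v - r), ?_, ?_⟩
      · simp only [mem_edgeSet, comap_adj, sub_add_cancel]
        exact h
      · simp only [Sym2.map_pair_eq, sub_add_cancel]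
    · rintro ⟨e', he', hee⟩
      refine e'.ind (fun x y hxy hmap => ?_) he' hee
      simp only [mem_edgeSet, comap_adj] at hxy
      simp only [Sym2.map_pair_eq, Sym2.eq_iff] at hmap
      rcases hmap with ⟨rfl, rfl⟩ | ⟨rfl, rfl⟩
      · exact hxy
      · exact hxy.symm
  rw [himg, Set.ncard_image_of_injective _ (Sym2.map.injective (add_left_injective r))]

lemma NC_card_le {n : ℕ} [NeZero n] (H : SimpleGraph (Fin n)) (hH : NC H) :
    H.edgeSet.ncard ≤ 2 * n - 3 := by
  classical
  have hn : 0 < n := Nat.pos_of_ne_zero (NeZero.ne n)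
  set z : Fin n := ⟨0, hn⟩ with hz
  set l : Fin n := ⟨n - 1, by omega⟩ with hl
  have himg : H.edgeSet = (fun p : Fin n × Fin n => s(p.1, p.2)) '' PS H z l := by
    ext e
    refine e.ind (fun u v => ?_)
    simp only [mem_edgeSet, Set.mem_image]
    constructor
    · intro huv
      rcases lt_or_gt_of_ne huv.ne with h | h
      · exact ⟨(u, v), ⟨huv, h, Fin.mk_le_of_le_val (by omega), Fin.le_def.mpr (by simp [hl]; omega)⟩, rfl⟩
      · exact ⟨(v, u), ⟨huv.symm, h, Fin.mk_le_of_le_val (by omega), Fin.le_def.mpr (by simp [hl]; omega)⟩, Sym2.eq_swap⟩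
    · rintro ⟨⟨x, y⟩, ⟨h1, -, -, -⟩, he⟩
      rw [Sym2.eq_iff] at he
      rcases he with ⟨rfl, rfl⟩ | ⟨rfl, rfl⟩
      · exact h1
      · exact h1.symm
  have hinj : Set.InjOn (fun p : Fin n × Fin n => s(p.1, p.2)) (PS H z l) := by
    rintro ⟨x, y⟩ ⟨-, hxy, -, -⟩ ⟨x', y'⟩ ⟨-, hxy', -, -⟩ he
    simp only [Sym2.eq_iff] at he
    rcases he with ⟨rfl, rfl⟩ | ⟨rfl, rfl⟩
    · rfl
    · exact absurd hxy (asymm hxy')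
  have := PS_bound H hH (n - 1) z l (by simp [hz, hl])
  rw [himg, Set.ncard_image_of_injOn hinj]
  omega

/-- saturation: adding a missing chord creates a crossing -/
lemma sat {n : ℕ} [NeZero n] (G : SimpleGraph (Fin n)) (hnc : NC G)
    (hcount : G.edgeSet.ncard = 2 * n - 3) (u v : Fin n) (huv : u < v)
    (hnadj : ¬ G.Adj u v) :
    ∃ x y : Fin n, G.Adj x y ∧ ((u < x ∧ x < v ∧ v < y) ∨ (x < u ∧ u < y ∧ y < v)) := by
  classical
  set G' := G ⊔ SimpleGraph.fromEdgeSet {s(u, v)} with hG'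
  have hadj' : ∀ x y : Fin n, G'.Adj x y ↔ G.Adj x y ∨ ((x = u ∧ y = v) ∨ (x = v ∧ y = u)) := by
    intro x y
    simp only [hG', sup_adj, fromEdgeSet_adj, Set.mem_singleton_iff, Sym2.eq_iff]
    constructor
    · rintro (h | ⟨h, -⟩)
      · exact Or.inl h
      · exact Or.inr h
    · rintro (h | h)
      · exact Or.inl h
      · refine Or.inr ⟨h, ?_⟩
        rcases h with ⟨rfl, rfl⟩ | ⟨rfl, rfl⟩
        · exact huv.ne
        · exact huv.ne'
  have hecard : G'.edgeSet.ncard = 2 * n - 2 := by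
    rw [hG', edgeSet_sup, edgeSet_fromEdgeSet]
    have hdiag : ({s(u, v)} : Set (Sym2 (Fin n))) \ {e | e.IsDiag} = {s(u, v)} := by
      ext e
      simp only [Set.mem_diff, Set.mem_singleton_iff, Set.mem_setOf_eq, and_iff_left_iff_imp]
      rintro rfl
      simp only [Sym2.isDiag_iff_proj_eq]
      exact huv.ne
    rw [show ({s(u, v)} : Set (Sym2 (Fin n))) \ Sym2.diagSet = {s(u, v)} from hdiag]
    rw [Set.ncard_union_eq (by
      simp only [Set.disjoint_singleton_right, mem_edgeSet]
      exact hnadj) (Set.toFinite _) (Set.toFinite _)]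
    rw [hcount, Set.ncard_singleton]
    have huvn : (u : ℕ) < (v : ℕ) := huv
    have := v.isLt
    omega
  have : ¬ NC G' := by
    intro h
    have := NC_card_le G' h
    rw [hecard] at this
    have huvn : (u : ℕ) < (v : ℕ) := huv
    have := v.isLt
    omega
  unfold NC at this
  push_neg at this
  obtain ⟨a, b, c, d, hab, hbc, hcd, h1, h2⟩ := this
  rw [hadj'] at h1 h2
  have horder : ∀ x y : Fin n, x < y → ¬(x = v ∧ y = u) := by
    rintro x y hxy ⟨rfl, rfl⟩
    exact absurd huv (asymm hxy)
  rcases h1 with h1 | h1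
  · rcases h2 with h2 | h2
    · exact absurd h2 (hnc a b c d hab hbc hcd h1)
    · rcases h2 with ⟨rfl, rfl⟩ | h2
      · exact ⟨a, c, h1, Or.inr ⟨hab, hbc, hcd⟩⟩
      · exact absurd h2 (horder b d (lt_trans hbc hcd))
  · rcases h1 with ⟨rfl, rfl⟩ | h1
    · rcases h2 with h2 | h2
      · exact ⟨b, d, h2, Or.inl ⟨hab, hbc, hcd⟩⟩
      · rcases h2 with ⟨rfl, rfl⟩ | h2
        · exact absurd hab (lt_irrefl _)
        · exact absurd h2 (horder b d (lt_trans hbc hcd))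
    · exact absurd h1 (horder a c (lt_trans hab hbc))

/-- inside triangle lemma -/
lemma inside_tri {n : ℕ} [NeZero n] (G : SimpleGraph (Fin n))
    (houter : ∀ i : Fin n, G.Adj i (i + 1)) (hnc : NC G)
    (hcount : G.edgeSet.ncard = 2 * n - 3) (i j : Fin n)
    (hij : (i : ℕ) + 2 ≤ (j : ℕ)) (hadj : G.Adj i j) :
    ∃ k : Fin n, i < k ∧ k < j ∧ G.Adj i k ∧ G.Adj k j := by
  classical
  have hjn := j.isLt
  set S : Finset (Fin n) := Finset.univ.filter (fun x => G.Adj i x ∧ i < x ∧ x < j) with hS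
  have hi1 : ((i + 1 : Fin n) : ℕ) = (i : ℕ) + 1 := by
    rw [Fin.add_def, Fin.val_one']
    rw [Nat.mod_eq_of_lt (show (1:ℕ) < n by omega)]
    exact Nat.mod_eq_of_lt (by omega)
  have hne : S.Nonempty := by
    refine ⟨i + 1, ?_⟩
    simp only [hS, Finset.mem_filter, Finset.mem_univ, true_and]
    exact ⟨houter i, Fin.lt_def.mpr (by omega), Fin.lt_def.mpr (by omega)⟩
  set k := S.max' hne with hk
  have hkS := S.max'_mem hne
  simp only [hS, Finset.mem_filter, Finset.mem_univ, true_and] at hkS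
  obtain ⟨hadj_ik, hik, hkj⟩ := hkS
  have hmax : ∀ x : Fin n, G.Adj i x → i < x → x < j → x ≤ k := by
    intro x h1 h2 h3
    exact S.le_max' x (by simp [hS, h1, h2, h3])
  refine ⟨k, hik, hkj, hadj_ik, ?_⟩
  by_contra hnadj
  obtain ⟨x, y, hxy, hcase⟩ := sat G hnc hcount k j hkj hnadj
  rcases hcase with ⟨h1, h2, h3⟩ | ⟨h1, h2, h3⟩
  · -- k < x < j < y : crosses (i, j)
    exact hnc i x j y (lt_trans hik h1) h2 h3 hadj hxy
  · -- x < k, k < y, y < j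
    rcases lt_trichotomy x i with hxi | hxi | hxi
    · exact hnc x i y j hxi (lt_trans hik h2) h3 hxy hadj
    · subst hxi
      have : y ≤ k := hmax y hxy (lt_trans hik h2) h3
      exact absurd h2 (not_lt.mpr this)
    · exact hnc i x k y hxi h1 h2 hadj_ik hxy

lemma val_one_of_4le {n : ℕ} [NeZero n] (hn : 4 ≤ n) : ((1 : Fin n) : ℕ) = 1 := by
  rw [Fin.val_one']
  exact Nat.mod_eq_of_lt (by omega)

theorem mop_no_internal_triangle_diagonal_common_neighbors {n : ℕ} [NeZero n]
    (G : SimpleGraph (Fin n)) (hn : 4 ≤ n) (hG : IsMop G)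
    (hno : ∀ a b c : Fin n, ¬ IsInternalTriangle G a b c)
    (i j : Fin n) (hij : i < j) (hd : IsDiagonal G i j) :
    (G.Adj (i + 1) j ∨ G.Adj (j - 1) i) ∧ (G.Adj (j + 1) i ∨ G.Adj (i - 1) j) := by
  obtain ⟨houter, hnc, hcount⟩ := hG
  obtain ⟨hadj, hne1, hne2⟩ := hd
  have h1n := val_one_of_4le (n := n) hn
  have hijv : (i : ℕ) < (j : ℕ) := hij
  have hjn := j.isLt
  -- (i+1).val = i.val + 1
  have hi1 : ((i + 1 : Fin n) : ℕ) = (i : ℕ) + 1 := by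
    rcases val_add_cases i 1 with ⟨h, _⟩ | ⟨_, h⟩
    · omega
    · omega
  have hij2 : (i : ℕ) + 2 ≤ (j : ℕ) := by
    rcases Nat.lt_or_ge ((i : ℕ) + 1) (j : ℕ) with h | h
    · omega
    · exfalso
      exact hne1 (Fin.ext (by omega))
  -- j - i ≤ n - 2 (i.e. not (i=0, j=n-1))
  have hgap : (j : ℕ) - (i : ℕ) ≤ n - 2 := by
    by_contra h
    push_neg at h
    have hiv : (i : ℕ) = 0 := by omega
    have hjv : (j : ℕ) = n - 1 := by omega
    apply hne2
    apply Fin.ext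
    rcases val_add_cases j 1 with ⟨h', h''⟩ | ⟨h', _⟩ <;> omega
  constructor
  · -- first conjunct
    obtain ⟨k, hik, hkj, hik_adj, hkj_adj⟩ := inside_tri G houter hnc hcount i j hij2 hadj
    have hikv : (i : ℕ) < (k : ℕ) := hik
    have hkjv : (k : ℕ) < (j : ℕ) := hkj
    by_cases hk1 : k = i + 1
    · exact Or.inl (hk1 ▸ hkj_adj)
    by_cases hk2 : j = k + 1
    · refine Or.inr ?_
      have : j - 1 = k := by rw [hk2]; exact add_sub_cancel_right k 1
      rw [this]
      exact hik_adj.symm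
    exfalso
    apply hno i k j
    refine ⟨⟨hik_adj, hk1, ?_⟩, ⟨hkj_adj, hk2, ?_⟩, hadj, hne1, hne2⟩
    · -- i ≠ k + 1
      intro h
      have : ((k + 1 : Fin n) : ℕ) = (k : ℕ) + 1 := by
        rcases val_add_cases k 1 with ⟨h', _⟩ | ⟨_, h'⟩ <;> omega
      rw [h] at hikv
      omega
    · -- k ≠ j + 1
      intro h
      rcases val_add_cases j 1 with ⟨h', _⟩ | ⟨h', _⟩
      · rw [h] at hkjv; omega
      · -- j + 1 wraps: j = n-1, j+1 = 0
        rw [h] at hikv hkjv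
        omega
  · -- second conjunct: rotate by j
    set G' := G.comap (fun x : Fin n => x + j) with hG'
    have houter' := outer_comap G houter j
    have hnc' := NC_comap G hnc j
    have hcount' : G'.edgeSet.ncard = 2 * n - 3 := by
      rw [hG', card_comap]; exact hcount
    set i' : Fin n := i - j with hi'
    have hi'v : (i' : ℕ) = (i : ℕ) + n - (j : ℕ) := by
      rw [hi', Fin.sub_def]
      simp only []
      rw [Nat.mod_eq_of_lt (by omega)]
      omega
    have hadj' : G'.Adj 0 i' := by
      simp only [hG', comap_adj, zero_add, hi', sub_add_cancel]
      exact hadj.symm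
    have h02 : ((0 : Fin n) : ℕ) + 2 ≤ (i' : ℕ) := by
      simp only [Fin.val_zero]
      omega
    obtain ⟨k', h0k, hki, hadj1, hadj2⟩ := inside_tri G' houter' hnc' hcount' 0 i' h02 hadj'
    have hk'v1 : 0 < (k' : ℕ) := h0k
    have hk'v2 : (k' : ℕ) < (i' : ℕ) := hki
    set m : Fin n := k' + j with hm
    have hadj_jm : G.Adj j m := by
      have := hadj1
      simp only [hG', comap_adj, zero_add] at this
      exact this
    have hadj_mi : G.Adj m i := by
      have := hadj2
      simp only [hG', comap_adj, hi', sub_add_cancel] at this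
      exact this
    -- m.val is in (j, n-1] or [0, i-1]
    have hmv : ((j : ℕ) < (m : ℕ) ∧ (m : ℕ) < n) ∨ ((m : ℕ) + 1 ≤ (i : ℕ)) := by
      rcases val_add_cases k' j with ⟨h, h'⟩ | ⟨h, h'⟩
      · left; rw [hm]; omega
      · right; rw [hm]; omega
    by_cases hm1 : m = j + 1
    · exact Or.inl (hm1 ▸ hadj_mi)
    by_cases hm2 : i = m + 1
    · refine Or.inr ?_
      have : i - 1 = m := by rw [hm2]; exact add_sub_cancel_right m 1
      rw [this]
      exact hadj_jm.symm
    exfalso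
    apply hno i j m
    refine ⟨⟨hadj, hne1, hne2⟩, ⟨hadj_jm, hm1, ?_⟩, hadj_mi.symm, ?_, hm2⟩
    · -- j ≠ m + 1
      intro h
      have hj' : (j : ℕ) = ((m + 1 : Fin n) : ℕ) := by rw [h]
      have hmn := m.isLt
      rcases val_add_cases m 1 with ⟨h', _⟩ | ⟨h', h''⟩ <;> rw [h'] at hj' <;> omega
    · -- m ≠ i + 1
      intro h
      rw [h, hi1] at hmv
      omega
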